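/- Let n ≥ 2 and let ω_1, …, ω_n be the n-th roots of unity. For any ρ in the open sector Γ_κ = {ρ ∈ ℂ : π(κ−1)/n < arg ρ < πκ/n} (for a fixed κ ∈ {1,…,2n}), the real parts Re(ρω_k) are pairwise distinct; hence the roots of unity can be numbered so that Re(ρω_1) < Re(ρω_2) < ⋯ < Re(ρω_n) for all ρ in the sector, with the same numbering throughout the sector. -/

import Mathlib

open Complex

/-- If `a, b` are distinct `n`-th roots of unity and `ρ^n` is not real, then
`Re (ρ a) ≠ Re (ρ b)`. -/
lemma key_distinct (n : ℕ) (hn : n ≠ 0) (ρ a b : ℂ)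
    (ha : a ^ n = 1) (hb : b ^ n = 1) (hab : a ≠ b) (him : (ρ ^ n).im ≠ 0) :
    (ρ * a).re ≠ (ρ * b).re := by
  intro h
  have ha0 : a ≠ 0 := by
    intro h0; rw [h0, zero_pow hn] at ha; exact zero_ne_one ha
  have hb0 : b ≠ 0 := by
    intro h0; rw [h0, zero_pow hn] at hb; exact zero_ne_one hb
  have hna : ‖a‖ = 1 := Complex.norm_eq_one_of_pow_eq_one ha hn
  have hnb : ‖b‖ = 1 := Complex.norm_eq_one_of_pow_eq_one hb hn
  have hca : (starRingEnd ℂ) a = a⁻¹ := (Complex.inv_eq_conj hna).symm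
  have hcb : (starRingEnd ℂ) b = b⁻¹ := (Complex.inv_eq_conj hnb).symm
  -- from equality of real parts: ρ a + conj ρ a⁻¹ = ρ b + conj ρ b⁻¹
  have h1 : ρ * a + (starRingEnd ℂ) ρ * a⁻¹ = ρ * b + (starRingEnd ℂ) ρ * b⁻¹ := by
    have e1 := Complex.add_conj (ρ * a)
    have e2 := Complex.add_conj (ρ * b)
    rw [map_mul, hca] at e1
    rw [map_mul, hcb] at e2
    rw [e1, e2, h]
  -- multiply by a*b and cancel (a - b)
  have h1' : ρ * a * a * b + (starRingEnd ℂ) ρ * b = ρ * b * b * a + (starRingEnd ℂ) ρ * a := by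
    have h1c := congrArg (fun z => z * (a * b)) h1
    field_simp at h1c
    refine mul_left_cancel₀ (mul_ne_zero ha0 hb0) ?_
    linear_combination (a * b) * h1c
  have h3 : ρ * (a * b) = (starRingEnd ℂ) ρ := by
    have hd : a - b ≠ 0 := sub_ne_zero.mpr hab
    apply mul_right_cancel₀ hd
    linear_combination h1'
  -- take n-th powers
  have h4 : ρ ^ n = (starRingEnd ℂ) (ρ ^ n) := by
    have := congrArg (fun z => z ^ n) h3
    simp only [mul_pow, ha, hb, map_pow] at this
    simpa using this
  have : (ρ ^ n).im = 0 := by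
    have h5 := congrArg Complex.im h4
    rw [Complex.conj_im] at h5
    linarith
  exact him this

/-- For `ρ` in the open sector, `ρ^n` has nonzero imaginary part. -/
lemma sector_pow_im_ne (n : ℕ) (hn : 2 ≤ n) (κ : ℕ) (r θ : ℝ) (hr : 0 < r)
    (h1 : Real.pi * (κ - 1) / n < θ) (h2 : θ < Real.pi * κ / n) :
    (((r : ℂ) * Complex.exp (θ * Complex.I)) ^ n).im ≠ 0 := by
  have hn0 : (0:ℝ) < n := by positivity
  have hpow : ((r : ℂ) * Complex.exp (θ * Complex.I)) ^ n
      = ((r ^ n : ℝ) : ℂ) * Complex.exp (((n * θ : ℝ) : ℂ) * Complex.I) := by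
    rw [mul_pow, ← Complex.exp_nat_mul]
    push_cast
    ring_nf
  rw [hpow]
  have him : (((r ^ n : ℝ) : ℂ) * Complex.exp (((n * θ : ℝ) : ℂ) * Complex.I)).im
      = r ^ n * Real.sin (n * θ) := by
    rw [Complex.mul_im, Complex.ofReal_re, Complex.ofReal_im, Complex.exp_ofReal_mul_I_im,
      zero_mul, add_zero]
  rw [him]
  have hrn : (0:ℝ) < r ^ n := by positivity
  have hsin : Real.sin (n * θ) ≠ 0 := by
    intro hs
    rw [Real.sin_eq_zero_iff] at hs
    obtain ⟨m, hm⟩ := hs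
    have hπ : (0:ℝ) < Real.pi := Real.pi_pos
    have hl : Real.pi * (κ - 1) < n * θ := by
      have := (div_lt_iff₀ hn0).mp h1
      nlinarith
    have hr2 : n * θ < Real.pi * κ := by
      rw [lt_div_iff₀ hn0] at h2
      nlinarith
    rw [← hm] at hl hr2
    have hl' : (κ : ℝ) - 1 < m := by nlinarith
    have hr' : (m : ℝ) < κ := by nlinarith
    have hA : (κ : ℤ) - 1 < m := by exact_mod_cast hl'
    have hB : (m : ℤ) < κ := by exact_mod_cast hr'
    omega
  positivity

/-- On the open sector `Γ_κ = {ρ = r e^{iθ} : r > 0, π(κ-1)/n < θ < πκ/n}`, the real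
parts `Re(ρ ω_k)` of `ρ` times the `n`-th roots of unity are pairwise distinct; hence
the roots of unity admit a numbering (a permutation) such that
`Re(ρω_1) < Re(ρω_2) < ⋯ < Re(ρω_n)` holds simultaneously for all `ρ` in the sector. -/
theorem roots_of_unity_ordering_on_sector (n : ℕ) (hn : 2 ≤ n)
    (ω : Fin n → ℂ) (hinj : Function.Injective ω) (hroot : ∀ k, (ω k) ^ n = 1)
    (κ : ℕ) (hκ1 : 1 ≤ κ) (hκ2 : κ ≤ 2 * n) :
    (∀ ρ : ℂ, (∃ r θ : ℝ, 0 < r ∧ Real.pi * (κ - 1) / n < θ ∧ θ < Real.pi * κ / n ∧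
        ρ = r * Complex.exp (θ * Complex.I)) →
      ∀ j k : Fin n, j ≠ k → (ρ * ω j).re ≠ (ρ * ω k).re) ∧
    ∃ σ : Equiv.Perm (Fin n),
      ∀ ρ : ℂ, (∃ r θ : ℝ, 0 < r ∧ Real.pi * (κ - 1) / n < θ ∧ θ < Real.pi * κ / n ∧
          ρ = r * Complex.exp (θ * Complex.I)) →
        ∀ j k : Fin n, j < k → (ρ * ω (σ j)).re < (ρ * ω (σ k)).re := by
  have hn0 : n ≠ 0 := by omega
  have hn0' : (0:ℝ) < n := by positivity
  set S : Set ℂ := {ρ | ∃ r θ : ℝ, 0 < r ∧ Real.pi * (κ - 1) / n < θ ∧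
      θ < Real.pi * κ / n ∧ ρ = r * Complex.exp (θ * Complex.I)} with hS
  have part1 : ∀ ρ ∈ S, ∀ j k : Fin n, j ≠ k → (ρ * ω j).re ≠ (ρ * ω k).re := by
    rintro ρ ⟨r, θ, hr, h1, h2, rfl⟩ j k hjk
    exact key_distinct n hn0 _ _ _ (hroot j) (hroot k) (fun h => hjk (hinj h))
      (sector_pow_im_ne n hn κ r θ hr h1 h2)
  constructor
  · exact part1
  -- S is connected
  have hconn : IsPreconnected S := by
    have himg : S = (fun p : ℝ × ℝ => (p.1 : ℂ) * Complex.exp ((p.2 : ℂ) * Complex.I)) ''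
        (Set.Ioi 0 ×ˢ Set.Ioo (Real.pi * (κ - 1) / n) (Real.pi * κ / n)) := by
      ext ρ
      constructor
      · rintro ⟨r, θ, hr, h1, h2, rfl⟩
        exact ⟨(r, θ), ⟨hr, h1, h2⟩, rfl⟩
      · rintro ⟨⟨r, θ⟩, ⟨hr, h1, h2⟩, rfl⟩
        exact ⟨r, θ, hr, h1, h2, rfl⟩
    rw [himg]
    apply IsPreconnected.image (isPreconnected_Ioi.prod isPreconnected_Ioo)
    apply Continuous.continuousOn
    exact (Complex.continuous_ofReal.comp continuous_fst).mul
      (Complex.continuous_exp.comp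
        ((Complex.continuous_ofReal.comp continuous_snd).mul continuous_const))
  have hπ : (0:ℝ) < Real.pi := Real.pi_pos
  have hlt : Real.pi * (κ - 1) / n < Real.pi * κ / n := by
    rw [div_lt_div_iff₀ hn0' hn0']
    nlinarith
  obtain ⟨θ₀, hθa, hθb⟩ := exists_between hlt
  set ρ₀ : ℂ := Complex.exp ((θ₀ : ℂ) * Complex.I) with hρ₀def
  have hρ₀ : ρ₀ ∈ S := ⟨1, θ₀, one_pos, hθa, hθb, by simp [hρ₀def]⟩
  -- sign constancy on S
  have hsign : ∀ j k : Fin n, j ≠ k → ∀ ρ₁ ∈ S, ∀ ρ₂ ∈ S,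
      (ρ₁ * ω j).re < (ρ₁ * ω k).re → (ρ₂ * ω j).re < (ρ₂ * ω k).re := by
    intro j k hjk ρ₁ h₁ ρ₂ h₂ hlt₁
    by_contra hle
    push_neg at hle
    have hne₂ := part1 ρ₂ h₂ j k hjk
    have hgt₂ : (ρ₂ * ω k).re < (ρ₂ * ω j).re := lt_of_le_of_ne hle (fun h => hne₂ h.symm)
    have hcont : ContinuousOn (fun ρ : ℂ => (ρ * ω j).re - (ρ * ω k).re) S := by
      apply Continuous.continuousOn
      exact (Complex.continuous_re.comp (continuous_id.mul continuous_const)).sub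
        (Complex.continuous_re.comp (continuous_id.mul continuous_const))
    have h0 : (0:ℝ) ∈ Set.Icc ((ρ₁ * ω j).re - (ρ₁ * ω k).re)
        ((ρ₂ * ω j).re - (ρ₂ * ω k).re) := ⟨by linarith, by linarith⟩
    obtain ⟨x, hxS, hx⟩ := hconn.intermediate_value h₁ h₂ hcont h0
    simp only at hx
    exact part1 x hxS j k hjk (by linarith)
  -- sort by the value at the base point
  refine ⟨Tuple.sort (fun k => (ρ₀ * ω k).re), ?_⟩
  rintro ρ hρ j k hjk
  set f : Fin n → ℝ := fun k => (ρ₀ * ω k).re with hf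
  have hσ : Tuple.sort f j ≠ Tuple.sort f k := fun h => hjk.ne (Equiv.injective _ h)
  have hmono : f (Tuple.sort f j) ≤ f (Tuple.sort f k) := Tuple.monotone_sort f hjk.le
  have hbase : (ρ₀ * ω (Tuple.sort f j)).re < (ρ₀ * ω (Tuple.sort f k)).re :=
    lt_of_le_of_ne hmono (part1 ρ₀ hρ₀ _ _ hσ)
  exact hsign _ _ hσ ρ₀ hρ₀ ρ hρ hbase
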